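/- Let q ≤ p ≤ n, let Γ₁ be distributed according to the uniform distribution on the complex Stiefel manifold V_q(ℂⁿ) (the pushforward of the Haar probability measure on U(n) under taking the first q columns), and let Δ be the top p×q block of Γ₁. Let X be a random n×q complex matrix, almost surely of rank q, whose law is invariant under left multiplication by every g ∈ U(n), and partition X = [Y; Z] with Y the top p×q block and Z the bottom (n−p)×q block. Then the law of Δ equals the law of Y·(Y*Y + Z*Z)^{−1/2}, where (Y*Y + Z*Z)^{−1/2} is the inverse of the positive definite square root of Y*Y + Z*Z (which is almost surely positive definite). -/

import Mathlib

open MeasureTheory Metric Matrix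
open scoped Quaternion RealInnerProductSpace ENNReal ComplexOrder

noncomputable section

instance {m n α : Type*} [MeasurableSpace α] : MeasurableSpace (Matrix m n α) :=
  inferInstanceAs (MeasurableSpace (m → n → α))

instance : MeasurableSpace ℍ[ℝ] := borel _

instance {n : ℕ} : MeasurableSpace (PiLp 2 (fun _ : Fin n => ℍ[ℝ])) :=
  MeasurableSpace.comap WithLp.ofLp (inferInstanceAs (MeasurableSpace (∀ _ : Fin n, ℍ[ℝ])))

/-- The first `q` columns of an `n × n` matrix. -/
def firstColumns (n q : ℕ) (hq : q ≤ n) (Γ : Matrix (Fin n) (Fin n) ℂ) :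
    Matrix (Fin n) (Fin q) ℂ :=
  Matrix.of fun i j => Γ i (Fin.castLE hq j)

/-- The top `p × q` block of an `n × q` matrix. -/
def topRows (n p q : ℕ) (hp : p ≤ n) (X : Matrix (Fin n) (Fin q) ℂ) :
    Matrix (Fin p) (Fin q) ℂ :=
  Matrix.of fun i j => X (Fin.castLE hp i) j

/-- The bottom `(n-p) × q` block of an `n × q` matrix. -/
def botRows (n p q : ℕ) (X : Matrix (Fin n) (Fin q) ℂ) :
    Matrix (Fin (n - p)) (Fin q) ℂ :=
  Matrix.of fun i j => X ⟨p + i.val, by have := i.isLt; omega⟩ j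

/-- The positive semidefinite square root of `Y^*Y + Z^*Z`, for `Y, Z` the top and bottom
blocks of `X`. -/
def gramSqrt (n p q : ℕ) (hp : p ≤ n) (X : Matrix (Fin n) (Fin q) ℂ) :
    Matrix (Fin q) (Fin q) ℂ :=
  let hA := ((Matrix.posSemidef_conjTranspose_mul_self (topRows n p q hp X)).add
    (Matrix.posSemidef_conjTranspose_mul_self (botRows n p q X)))
  (hA.1.eigenvectorUnitary : Matrix (Fin q) (Fin q) ℂ) *
    diagonal ((fun r : ℝ => (r : ℂ)) ∘ Real.sqrt ∘ hA.1.eigenvalues) *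
    (star hA.1.eigenvectorUnitary : Matrix (Fin q) (Fin q) ℂ)

/-- The positive semidefinite square root (the former Mathlib `PosSemidef.sqrt`). -/
def Matrix.PosSemidef.sqrt {q : ℕ} {A : Matrix (Fin q) (Fin q) ℂ} (hA : A.PosSemidef) :
    Matrix (Fin q) (Fin q) ℂ :=
  (hA.1.eigenvectorUnitary : Matrix (Fin q) (Fin q) ℂ) *
    diagonal ((fun r : ℝ => (r : ℂ)) ∘ Real.sqrt ∘ hA.1.eigenvalues) *
    (star hA.1.eigenvectorUnitary : Matrix (Fin q) (Fin q) ℂ)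

lemma gramSqrt_eq_sqrt (n p q : ℕ) (hp : p ≤ n) (X : Matrix (Fin n) (Fin q) ℂ) :
    gramSqrt n p q hp X = ((Matrix.posSemidef_conjTranspose_mul_self (topRows n p q hp X)).add
      (Matrix.posSemidef_conjTranspose_mul_self (botRows n p q X))).sqrt := rfl

open scoped MatrixOrder in
lemma Matrix.PosSemidef.sqrt_eq_cfc {q : ℕ} {A : Matrix (Fin q) (Fin q) ℂ}
    (hA : A.PosSemidef) : hA.sqrt = CFC.sqrt A := by
  rw [CFC.sqrt_eq_cfc, cfc_nnreal_eq_real _ A hA.nonneg, hA.1.cfc_eq]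
  simp only [Matrix.IsHermitian.cfc, Matrix.PosSemidef.sqrt, Unitary.conjStarAlgAut_apply]
  congr 3
  funext i
  simp [Real.coe_sqrt, Real.coe_toNNReal', hA.eigenvalues_nonneg i]

open scoped MatrixOrder in
lemma Matrix.PosSemidef.sqrt_mul_self {q : ℕ} {A : Matrix (Fin q) (Fin q) ℂ}
    (hA : A.PosSemidef) : hA.sqrt * hA.sqrt = A := by
  rw [hA.sqrt_eq_cfc]; exact CFC.sqrt_mul_sqrt_self A hA.nonneg

open scoped MatrixOrder in
lemma Matrix.PosSemidef.posSemidef_sqrt {q : ℕ} {A : Matrix (Fin q) (Fin q) ℂ}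
    (hA : A.PosSemidef) : hA.sqrt.PosSemidef := by
  rw [hA.sqrt_eq_cfc]; exact Matrix.nonneg_iff_posSemidef.mp (CFC.sqrt_nonneg A)

open scoped MatrixOrder in
lemma Matrix.PosSemidef.eq_sqrt_of_sq_eq {q : ℕ} {A B : Matrix (Fin q) (Fin q) ℂ}
    (hB : B.PosSemidef) (hA : A.PosSemidef) (h : B ^ 2 = A) : B = hA.sqrt := by
  rw [hA.sqrt_eq_cfc]
  exact (CFC.sqrt_unique (by rw [← pow_two]; exact h) hB.nonneg).symm

open scoped MatrixOrder in
lemma Matrix.PosSemidef.eq_of_sq_eq_sq {q : ℕ} {A B : Matrix (Fin q) (Fin q) ℂ}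
    (hA : A.PosSemidef) (hB : B.PosSemidef) (h : A ^ 2 = B ^ 2) : A = B := by
  rw [← CFC.sqrt_sq A hA.nonneg, ← CFC.sqrt_sq B hB.nonneg, h]

/-! ### Auxiliary instances -/

instance {m n : Type*} [Countable m] [Countable n] : BorelSpace (Matrix m n ℂ) :=
  inferInstanceAs (BorelSpace (m → n → ℂ))

instance {m n : Type*} [Countable m] [Countable n] :
    SecondCountableTopology (Matrix m n ℂ) :=
  inferInstanceAs (SecondCountableTopology (m → n → ℂ))

instance {m n : Type*} [Countable m] [Countable n] : PolishSpace (Matrix m n ℂ) :=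
  inferInstanceAs (PolishSpace (m → n → ℂ))

instance {n : ℕ} : BorelSpace (Matrix.unitaryGroup (Fin n) ℂ) := Subtype.borelSpace _

instance {n : ℕ} : ContinuousMul (Matrix.unitaryGroup (Fin n) ℂ) := by
  constructor
  apply continuous_induced_rng.2
  exact ((continuous_subtype_val.comp continuous_fst).matrix_mul
    (continuous_subtype_val.comp continuous_snd))

instance {n : ℕ} : ContinuousInv (Matrix.unitaryGroup (Fin n) ℂ) := by
  constructor
  apply continuous_induced_rng.2
  exact (continuous_subtype_val.star :
    Continuous fun (a : Matrix.unitaryGroup (Fin n) ℂ) => star (a : Matrix (Fin n) (Fin n) ℂ))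

instance {n : ℕ} : IsTopologicalGroup (Matrix.unitaryGroup (Fin n) ℂ) := ⟨⟩

instance {n : ℕ} : CompactSpace (Matrix.unitaryGroup (Fin n) ℂ) := by
  apply isCompact_iff_compactSpace.mp
  have hsub : (Matrix.unitaryGroup (Fin n) ℂ : Set (Matrix (Fin n) (Fin n) ℂ)) ⊆
      Set.pi Set.univ (fun _ : Fin n => Set.pi Set.univ
        (fun _ : Fin n => closedBall (0:ℂ) 1)) := by
    intro A hA
    intro i _ j _
    rw [mem_closedBall_zero_iff]
    exact entry_norm_bound_of_unitary hA i j
  have hclosed : IsClosed (Matrix.unitaryGroup (Fin n) ℂ : Set (Matrix (Fin n) (Fin n) ℂ)) := by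
    have : (Matrix.unitaryGroup (Fin n) ℂ : Set (Matrix (Fin n) (Fin n) ℂ))
        = {A | star A * A = 1} ∩ {A | A * star A = 1} := by
      ext A; exact Iff.rfl
    rw [this]
    exact ((isClosed_singleton (x := (1 : Matrix (Fin n) (Fin n) ℂ))).preimage
        (continuous_id.matrix_conjTranspose.matrix_mul continuous_id)).inter
      ((isClosed_singleton (x := (1 : Matrix (Fin n) (Fin n) ℂ))).preimage
        (continuous_id.matrix_mul continuous_id.matrix_conjTranspose))
  exact IsCompact.of_isClosed_subset
    (isCompact_univ_pi fun _ => isCompact_univ_pi fun _ => isCompact_closedBall _ _)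
    hclosed hsub

/-! ### Right invariance of the Haar probability measure -/

lemma right_inv {n : ℕ} (η : Measure (Matrix.unitaryGroup (Fin n) ℂ))
    (hη : IsProbabilityMeasure η)
    (hηinv : ∀ g : Matrix.unitaryGroup (Fin n) ℂ, η.map (fun x => g * x) = η)
    (u : Matrix.unitaryGroup (Fin n) ℂ) : η.map (fun x => x * u) = η := by
  haveI := hη
  haveI hli : η.IsMulLeftInvariant := ⟨hηinv⟩
  haveI : η.IsOpenPosMeasure :=
    isOpenPosMeasure_of_mulLeftInvariant_of_compact Set.univ isCompact_univ (by simp)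
  haveI : η.IsHaarMeasure := ⟨⟩
  set ν : Measure (Matrix.unitaryGroup (Fin n) ℂ) := η.map (fun x => x * u) with hν
  have hmr : Measurable fun x : Matrix.unitaryGroup (Fin n) ℂ => x * u :=
    (continuous_id.mul continuous_const).measurable
  haveI : IsProbabilityMeasure ν := Measure.isProbabilityMeasure_map hmr.aemeasurable
  haveI hliν : ν.IsMulLeftInvariant := by
    constructor
    intro g
    have hml : Measurable fun x : Matrix.unitaryGroup (Fin n) ℂ => g * x :=
      (continuous_const.mul continuous_id).measurable
    rw [hν, Measure.map_map hml hmr]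
    have : ((fun x => g * x) ∘ fun x => x * u) = (fun x => x * u) ∘ (fun x => g * x) := by
      funext x; simp [Function.comp, mul_assoc]
    rw [this, ← Measure.map_map hmr hml, hηinv g]
  haveI : ν.IsOpenPosMeasure :=
    isOpenPosMeasure_of_mulLeftInvariant_of_compact Set.univ isCompact_univ (by simp)
  haveI : ν.IsHaarMeasure := ⟨⟩
  exact Measure.isHaarMeasure_eq_of_isProbabilityMeasure ν η

/-! ### Linear algebra lemmas -/

lemma sqrt_congr {q : ℕ} {A B : Matrix (Fin q) (Fin q) ℂ} (hA : A.PosSemidef)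
    (hB : B.PosSemidef) (h : A = B) : hA.sqrt = hB.sqrt := by subst h; rfl

lemma gram_split (n p q : ℕ) (hp : p ≤ n) (X : Matrix (Fin n) (Fin q) ℂ) :
    (topRows n p q hp X)ᴴ * topRows n p q hp X + (botRows n p q X)ᴴ * botRows n p q X
      = Xᴴ * X := by
  ext j k
  simp only [Matrix.add_apply, Matrix.mul_apply, Matrix.conjTranspose_apply, topRows, botRows,
    Matrix.of_apply]
  let e : Fin p ⊕ Fin (n - p) ≃ Fin n := finSumFinEquiv.trans (finCongr (by omega))
  have h1 : ∀ i : Fin p, e (Sum.inl i) = Fin.castLE hp i := by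
    intro i; apply Fin.ext; simp [e]
  have h2 : ∀ i : Fin (n - p), e (Sum.inr i) = ⟨p + i.val, by have := i.isLt; omega⟩ := by
    intro i; apply Fin.ext; simp [e]
  rw [← Fintype.sum_equiv e (fun i => star (X (e i) j) * X (e i) k)
    (fun i => star (X i j) * X i k) (fun i => rfl)]
  rw [Fintype.sum_sum_type]
  refine congrArg₂ (· + ·) ?_ ?_
  · exact Finset.sum_congr rfl fun i _ => by rw [h1]
  · exact Finset.sum_congr rfl fun i _ => by rw [h2]

lemma gramSqrt_mul_self (n p q : ℕ) (hp : p ≤ n) (X : Matrix (Fin n) (Fin q) ℂ) :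
    gramSqrt n p q hp X * gramSqrt n p q hp X = Xᴴ * X := by
  rw [gramSqrt_eq_sqrt, Matrix.PosSemidef.sqrt_mul_self, gram_split]

lemma gramSqrt_herm (n p q : ℕ) (hp : p ≤ n) (X : Matrix (Fin n) (Fin q) ℂ) :
    (gramSqrt n p q hp X)ᴴ = gramSqrt n p q hp X := by
  rw [gramSqrt_eq_sqrt]; exact (Matrix.PosSemidef.posSemidef_sqrt _).isHermitian

lemma mulVec_inj {n q : ℕ} (X : Matrix (Fin n) (Fin q) ℂ) (h : X.rank = q) :
    ∀ x : Fin q → ℂ, X *ᵥ x = 0 → x = 0 := by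
  have hker : LinearMap.ker X.mulVecLin = ⊥ := by
    have h1 : Module.finrank ℂ (LinearMap.range X.mulVecLin)
        + Module.finrank ℂ (LinearMap.ker X.mulVecLin) = q := by
      rw [LinearMap.finrank_range_add_finrank_ker]
      simp
    have h2 : Module.finrank ℂ (LinearMap.range X.mulVecLin) = q := h
    have h3 : Module.finrank ℂ (LinearMap.ker X.mulVecLin) = 0 := by omega
    exact Submodule.finrank_eq_zero.mp h3
  intro x hx
  have := LinearMap.ker_eq_bot.mp hker
  exact this (by simpa [Matrix.mulVecLin_apply] using hx)

lemma gram_posDef {n q : ℕ} (X : Matrix (Fin n) (Fin q) ℂ) (h : X.rank = q) :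
    (Xᴴ * X).PosDef := by
  refine Matrix.posDef_iff_dotProduct_mulVec.mpr
    ⟨Matrix.isHermitian_conjTranspose_mul_self _, fun x hx => ?_⟩
  have hpsd := (Matrix.posSemidef_conjTranspose_mul_self X).dotProduct_mulVec_nonneg x
  have hne : dotProduct (star x) ((Xᴴ * X) *ᵥ x) ≠ 0 := by
    rw [← Matrix.mulVec_mulVec, Matrix.dotProduct_mulVec, Matrix.vecMul_conjTranspose,
      star_star]
    rw [Ne, dotProduct_star_self_eq_zero]
    intro h0
    exact hx (mulVec_inj X h x h0)
  exact lt_of_le_of_ne hpsd (Ne.symm hne)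

lemma rank_iff_det {n q : ℕ} (X : Matrix (Fin n) (Fin q) ℂ) :
    X.rank = q ↔ (Xᴴ * X).det ≠ 0 := by
  constructor
  · intro h
    exact (gram_posDef X h).det_pos.ne'
  · intro h
    have : (Xᴴ * X).rank = Fintype.card (Fin q) :=
      Matrix.rank_of_isUnit _ (Matrix.isUnit_iff_isUnit_det _ |>.mpr (isUnit_iff_ne_zero.mpr h))
    rw [Matrix.rank_conjTranspose_mul_self] at this
    simpa using this

lemma gramSqrt_det_ne {n p q : ℕ} (hp : p ≤ n) (X : Matrix (Fin n) (Fin q) ℂ)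
    (h : X.rank = q) : (gramSqrt n p q hp X).det ≠ 0 := by
  intro h0
  have : (Xᴴ * X).det = 0 := by
    rw [← gramSqrt_mul_self n p q hp X, Matrix.det_mul, h0, mul_zero]
  exact (rank_iff_det X).mp h this

lemma stiefel_of_rank {n p q : ℕ} (hp : p ≤ n) (X : Matrix (Fin n) (Fin q) ℂ)
    (h : X.rank = q) :
    (X * (gramSqrt n p q hp X)⁻¹)ᴴ * (X * (gramSqrt n p q hp X)⁻¹) = 1 := by
  set S := gramSqrt n p q hp X with hS
  have hdet : IsUnit S.det := isUnit_iff_ne_zero.mpr (gramSqrt_det_ne hp X h)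
  have hH : Sᴴ = S := gramSqrt_herm n p q hp X
  calc (X * S⁻¹)ᴴ * (X * S⁻¹) = S⁻¹ᴴ * (Xᴴ * X) * S⁻¹ := by
        rw [Matrix.conjTranspose_mul]; rw [Matrix.mul_assoc, Matrix.mul_assoc,
          Matrix.mul_assoc]
    _ = S⁻¹ * (S * S) * S⁻¹ := by rw [Matrix.conjTranspose_nonsing_inv, hH,
          gramSqrt_mul_self n p q hp X]
    _ = (S⁻¹ * S) * (S * S⁻¹) := by rw [Matrix.mul_assoc, Matrix.mul_assoc, Matrix.mul_assoc]
    _ = 1 := by rw [Matrix.nonsing_inv_mul _ hdet, Matrix.mul_nonsing_inv _ hdet, Matrix.mul_one]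

lemma gramSqrt_unitary {n p q : ℕ} (hp : p ≤ n) (X : Matrix (Fin n) (Fin q) ℂ)
    (g : Matrix.unitaryGroup (Fin n) ℂ) :
    gramSqrt n p q hp ((g : Matrix (Fin n) (Fin n) ℂ) * X) = gramSqrt n p q hp X := by
  rw [gramSqrt_eq_sqrt, gramSqrt_eq_sqrt]; apply sqrt_congr
  rw [gram_split, gram_split, Matrix.conjTranspose_mul, Matrix.mul_assoc,
    ← Matrix.mul_assoc (g : Matrix (Fin n) (Fin n) ℂ)ᴴ]
  have : (g : Matrix (Fin n) (Fin n) ℂ)ᴴ * (g : Matrix (Fin n) (Fin n) ℂ) = 1 := by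
    have := g.2.1
    simpa [Matrix.star_eq_conjTranspose] using this
  rw [this, Matrix.one_mul]

lemma topRows_mul {n p q : ℕ} (hp : p ≤ n) (M : Matrix (Fin n) (Fin q) ℂ)
    (B : Matrix (Fin q) (Fin q) ℂ) :
    topRows n p q hp (M * B) = topRows n p q hp M * B := by
  ext i j; rfl

lemma firstColumns_mul {n q : ℕ} (hq : q ≤ n) (g U : Matrix (Fin n) (Fin n) ℂ) :
    firstColumns n q hq (g * U) = g * firstColumns n q hq U := by
  ext i j; rfl

lemma exists_unitary_ext {n q : ℕ} (hq : q ≤ n) (W : Matrix (Fin n) (Fin q) ℂ)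
    (hW : Wᴴ * W = 1) :
    ∃ u : Matrix.unitaryGroup (Fin n) ℂ,
      firstColumns n q hq (u : Matrix (Fin n) (Fin n) ℂ) = W := by
  classical
  set v : Fin n → EuclideanSpace ℂ (Fin n) := fun j =>
    if h : (j : ℕ) < q then WithLp.toLp 2 (fun i => W i ⟨j, h⟩) else 0 with hv
  set s : Set (Fin n) := {j | (j : ℕ) < q} with hs
  have horth : Orthonormal ℂ (s.restrict v) := by
    rw [orthonormal_iff_ite]
    rintro ⟨j, hj⟩ ⟨k, hk⟩
    have hj' : (j : ℕ) < q := hj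
    have hk' : (k : ℕ) < q := hk
    have : (inner ℂ (s.restrict v ⟨j, hj⟩) (s.restrict v ⟨k, hk⟩) : ℂ)
        = (Wᴴ * W) ⟨(j : ℕ), hj'⟩ ⟨(k : ℕ), hk'⟩ := by
      simp only [Set.restrict_apply, hv, dif_pos hj', dif_pos hk']
      rw [Matrix.mul_apply]
      simp only [Matrix.conjTranspose_apply, PiLp.inner_apply, RCLike.inner_apply]
      exact Finset.sum_congr rfl fun x _ => by
        rw [mul_comm]; change star ((v j).ofLp x) * (v k).ofLp x = _
        simp [hv, dif_pos hj', dif_pos hk']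
    rw [this, hW]
    simp only [Matrix.one_apply]
    by_cases h : j = k
    · subst h; simp
    · rw [if_neg, if_neg]
      · simp [Fin.ext_iff]; exact fun hc => h (Fin.ext hc)
      · exact fun hc => h (by
          have := congrArg Fin.val hc
          exact Fin.ext (by simpa using this))
  have hcard : Module.finrank ℂ (EuclideanSpace ℂ (Fin n)) = Fintype.card (Fin n) := by
    simp
  obtain ⟨b, hb⟩ := horth.exists_orthonormalBasis_extension_of_card_eq hcard
  set U : Matrix (Fin n) (Fin n) ℂ := Matrix.of fun i j => b j i with hU
  have hmem : U ∈ Matrix.unitaryGroup (Fin n) ℂ := by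
    rw [Matrix.mem_unitaryGroup_iff']
    ext j k
    have : (star U * U) j k = (inner ℂ (b j) (b k) : ℂ) := by
      rw [Matrix.mul_apply]
      simp [hU, Matrix.star_apply, PiLp.inner_apply, RCLike.inner_apply, mul_comm]
    rw [this, orthonormal_iff_ite.mp b.orthonormal j k]
    simp [Matrix.one_apply]
  refine ⟨⟨U, hmem⟩, ?_⟩
  ext i j
  have hjs : (Fin.castLE hq j) ∈ s := j.isLt
  have hbv := hb (Fin.castLE hq j) hjs
  show U i (Fin.castLE hq j) = W i j
  have : U i (Fin.castLE hq j) = b (Fin.castLE hq j) i := rfl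
  rw [this, hbv]
  have hlt : ((Fin.castLE hq j : Fin n) : ℕ) < q := j.isLt
  show (if h : ((Fin.castLE hq j : Fin n) : ℕ) < q
      then WithLp.toLp 2 (fun i => W i ⟨(Fin.castLE hq j : Fin n), h⟩) else 0).ofLp i = W i j
  rw [dif_pos hlt]
  exact congrArg (W i) (Fin.ext rfl)

/-! ### Measurability of the matrix square root -/

lemma isClosed_psd (q : ℕ) : IsClosed {A : Matrix (Fin q) (Fin q) ℂ | A.PosSemidef} := by
  have : {A : Matrix (Fin q) (Fin q) ℂ | A.PosSemidef}
      = {A : Matrix (Fin q) (Fin q) ℂ | Aᴴ = A} ∩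
        ⋂ x : Fin q → ℂ, {A : Matrix (Fin q) (Fin q) ℂ |
          0 ≤ dotProduct (star x) (A *ᵥ x)} := by
    ext A
    simp only [Set.mem_setOf_eq, Set.mem_inter_iff, Set.mem_iInter]
    exact Matrix.posSemidef_iff_dotProduct_mulVec
  rw [this]
  refine (isClosed_eq (continuous_id.matrix_conjTranspose) continuous_id).inter
    (isClosed_iInter fun x => ?_)
  have hc : Continuous fun A : Matrix (Fin q) (Fin q) ℂ =>
      dotProduct (star x) (A *ᵥ x) :=
    (continuous_const.dotProduct (continuous_id.matrix_mulVec continuous_const))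
  have hcl : IsClosed {z : ℂ | 0 ≤ z} := by
    have : {z : ℂ | 0 ≤ z} = Complex.re ⁻¹' (Set.Ici 0) ∩ Complex.im ⁻¹' {0} := by
      ext z
      simp [Complex.le_def, eq_comm]
    rw [this]
    exact (isClosed_Ici.preimage Complex.continuous_re).inter
      (isClosed_singleton.preimage Complex.continuous_im)
  exact hcl.preimage hc

def sqrtD (q : ℕ) (A : Matrix (Fin q) (Fin q) ℂ) : Matrix (Fin q) (Fin q) ℂ :=
  @dite _ A.PosSemidef (Classical.dec _) (fun h => h.sqrt) (fun _ => 0)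

lemma sqrtD_pos {q : ℕ} {A : Matrix (Fin q) (Fin q) ℂ} (h : A.PosSemidef) :
    sqrtD q A = h.sqrt := dif_pos h

lemma sqrtD_neg {q : ℕ} {A : Matrix (Fin q) (Fin q) ℂ} (h : ¬ A.PosSemidef) :
    sqrtD q A = 0 := dif_neg h

lemma measurable_sqrtD (q : ℕ) : Measurable (sqrtD q) := by
  classical
  have hPmeas : MeasurableSet {A : Matrix (Fin q) (Fin q) ℂ | A.PosSemidef} :=
    (isClosed_psd q).measurableSet
  haveI : StandardBorelSpace ↥{A : Matrix (Fin q) (Fin q) ℂ | A.PosSemidef} :=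
    hPmeas.standardBorel
  haveI : BorelSpace ↥{A : Matrix (Fin q) (Fin q) ℂ | A.PosSemidef} :=
    Subtype.borelSpace _
  set e : ↥{A : Matrix (Fin q) (Fin q) ℂ | A.PosSemidef} → Matrix (Fin q) (Fin q) ℂ :=
    fun B => (B : Matrix (Fin q) (Fin q) ℂ) * (B : Matrix (Fin q) (Fin q) ℂ) with he
  have hemeas : Measurable e :=
    (continuous_subtype_val.matrix_mul continuous_subtype_val).measurable
  have heinj : Function.Injective e := by
    rintro ⟨A, hA⟩ ⟨B, hB⟩ h
    have : A = B := hA.eq_of_sq_eq_sq hB (by rw [pow_two, pow_two]; exact h)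
    exact Subtype.ext this
  have hemb : MeasurableEmbedding e := hemeas.measurableEmbedding heinj
  intro t ht
  have key : sqrtD q ⁻¹' t =
      (e '' (Subtype.val ⁻¹' t)) ∪
        (if (0 : Matrix (Fin q) (Fin q) ℂ) ∈ t
          then {A : Matrix (Fin q) (Fin q) ℂ | A.PosSemidef}ᶜ else ∅) := by
    ext A
    constructor
    · intro hA
      by_cases hP : A.PosSemidef
      · left
        refine ⟨⟨hP.sqrt, hP.posSemidef_sqrt⟩, ?_, ?_⟩
        · simpa [sqrtD_pos hP] using hA
        · simp [he, hP.sqrt_mul_self]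
      · right
        have h0 : (0 : Matrix (Fin q) (Fin q) ℂ) ∈ t := by
          have h00 : sqrtD q A = 0 := sqrtD_neg hP
          have : sqrtD q A ∈ t := hA
          rwa [h00] at this
        rw [if_pos h0]
        exact hP
    · intro hA
      rcases hA with ⟨⟨B, hB⟩, hBt, hBe⟩ | hA
      · have hP : A.PosSemidef := by
          rw [← hBe]
          have : B * B = Bᴴ * B := by rw [hB.isHermitian]
          rw [he]
          simp only
          rw [this]
          exact Matrix.posSemidef_conjTranspose_mul_self B
        have : hP.sqrt = B := by
          symm
          exact hB.eq_sqrt_of_sq_eq hP (by rw [pow_two]; exact hBe)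
        simpa [sqrtD_pos hP, this] using hBt
      · split_ifs at hA with h0
        · have hP : ¬ A.PosSemidef := hA
          simpa [sqrtD_neg hP] using h0
        · exact absurd hA (Set.notMem_empty A)
  rw [key]
  refine (hemb.measurableSet_image' (measurable_subtype_coe ht)).union ?_
  split_ifs
  · exact hPmeas.compl
  · exact MeasurableSet.empty

lemma gramSqrt_eq_sqrtD (n p q : ℕ) (hp : p ≤ n) (X : Matrix (Fin n) (Fin q) ℂ) :
    gramSqrt n p q hp X = sqrtD q (Xᴴ * X) := by
  rw [sqrtD_pos (Matrix.posSemidef_conjTranspose_mul_self X), gramSqrt_eq_sqrt]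
  exact sqrt_congr _ _ (gram_split n p q hp X)

lemma measurable_matrix_entry {α : Type*} [MeasurableSpace α] {l r : Type*}
    {f : α → Matrix l r ℂ} (hf : Measurable f) (i : l) (j : r) :
    Measurable fun a => f a i j :=
  ((measurable_pi_apply j).comp ((measurable_pi_apply i).comp hf))

lemma measurable_matrix_mul {α : Type*} [MeasurableSpace α] {l m' r : Type*}
    [Fintype m'] {f : α → Matrix l m' ℂ} {g : α → Matrix m' r ℂ}
    (hf : Measurable f) (hg : Measurable g) :
    Measurable fun a => f a * g a := by
  apply measurable_pi_lambda
  intro i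
  apply measurable_pi_lambda
  intro j
  have : (fun a => (f a * g a) i j) = fun a => ∑ k, f a i k * g a k j := by
    funext a; rw [Matrix.mul_apply]
  rw [this]
  exact Finset.measurable_sum _ fun k _ =>
    (measurable_matrix_entry hf i k).mul (measurable_matrix_entry hg k j)

lemma measurable_matrix_inv (q : ℕ) :
    Measurable fun A : Matrix (Fin q) (Fin q) ℂ => A⁻¹ := by
  have : (fun A : Matrix (Fin q) (Fin q) ℂ => A⁻¹)
      = fun A => (Ring.inverse A.det) • A.adjugate := by
    funext A; rw [Matrix.inv_def]
  rw [this]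
  have hdet : Measurable fun A : Matrix (Fin q) (Fin q) ℂ => Ring.inverse A.det := by
    have h1 : Measurable fun A : Matrix (Fin q) (Fin q) ℂ => A.det :=
      (continuous_id.matrix_det).measurable
    have h2 : Measurable fun z : ℂ => Ring.inverse z := by
      simp only [Ring.inverse_eq_inv']
      exact measurable_inv
    exact h2.comp h1
  have hadj : Measurable fun A : Matrix (Fin q) (Fin q) ℂ => A.adjugate :=
    (continuous_id.matrix_adjugate).measurable
  exact hdet.smul hadj

lemma continuous_topRows (n p q : ℕ) (hp : p ≤ n) : Continuous (topRows n p q hp) := by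
  apply continuous_pi
  intro i
  apply continuous_pi
  intro j
  exact (continuous_apply j).comp (continuous_apply (Fin.castLE hp i))

lemma continuous_firstColumns (n q : ℕ) (hq : q ≤ n) : Continuous (firstColumns n q hq) := by
  apply continuous_pi
  intro i
  apply continuous_pi
  intro j
  exact (continuous_apply (Fin.castLE hq j)).comp (continuous_apply i)

/-- **Proposition.**  Let `q ≤ p ≤ n`, let `Γ₁` be uniform on the complex Stiefel manifold
`V_q(ℂⁿ)` (the first `q` columns of a Haar-distributed, i.e. left-invariant-probability-law,
unitary matrix) and let `Δ` be its top `p×q` block.  Let `X` be a random `n×q` complex matrix,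
almost surely of rank `q`, whose law is invariant under left multiplication by every
`g ∈ U(n)`, partitioned into a top block `Y` and bottom block `Z`.  Then the law of `Δ`
equals the law of `Y·(Y*Y + Z*Z)^{-1/2}`, the inverse of the positive (semi)definite square
root of `Y*Y + Z*Z` (which is almost surely positive definite) being used. -/
theorem law_top_block_of_stiefel (n p q : ℕ) (hq : q ≤ p) (hp : p ≤ n)
    (η : Measure (Matrix.unitaryGroup (Fin n) ℂ)) (hη : IsProbabilityMeasure η)
    (hηinv : ∀ g : Matrix.unitaryGroup (Fin n) ℂ, η.map (fun x => g * x) = η)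
    (μX : Measure (Matrix (Fin n) (Fin q) ℂ)) (hμX : IsProbabilityMeasure μX)
    (hrank : μX {A : Matrix (Fin n) (Fin q) ℂ | A.rank = q} = 1)
    (hinv : ∀ g : Matrix.unitaryGroup (Fin n) ℂ,
      μX.map (fun A => (g : Matrix (Fin n) (Fin n) ℂ) * A) = μX) :
    η.map (fun Γ : Matrix.unitaryGroup (Fin n) ℂ =>
        topRows n p q hp (firstColumns n q (hq.trans hp) (Γ : Matrix (Fin n) (Fin n) ℂ)))
      = μX.map (fun X => topRows n p q hp X * (gramSqrt n p q hp X)⁻¹) := by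
  classical
  have hqn : q ≤ n := hq.trans hp
  haveI := hη
  haveI := hμX
  set L : Matrix.unitaryGroup (Fin n) ℂ → Matrix (Fin p) (Fin q) ℂ :=
    fun Γ => topRows n p q hp (firstColumns n q (hq.trans hp) (Γ : Matrix (Fin n) (Fin n) ℂ))
    with hL
  set F : Matrix (Fin n) (Fin q) ℂ → Matrix (Fin p) (Fin q) ℂ :=
    fun X => topRows n p q hp X * (gramSqrt n p q hp X)⁻¹ with hF
  have hLmeas : Measurable L := ((continuous_topRows n p q hp).comp
    ((continuous_firstColumns n q (hq.trans hp)).comp continuous_subtype_val)).measurable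
  have hFmeas : Measurable F := by
    have hFalt : F = fun X => topRows n p q hp X * (sqrtD q (Xᴴ * X))⁻¹ := by
      funext X
      show topRows n p q hp X * (gramSqrt n p q hp X)⁻¹ = _
      rw [gramSqrt_eq_sqrtD]
    rw [hFalt]
    exact measurable_matrix_mul ((continuous_topRows n p q hp).measurable)
      ((measurable_matrix_inv q).comp ((measurable_sqrtD q).comp
        ((continuous_id.matrix_conjTranspose.matrix_mul continuous_id).measurable)))
  have hmulGX : Measurable fun gX :
      (Matrix.unitaryGroup (Fin n) ℂ) × Matrix (Fin n) (Fin q) ℂ =>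
      (gX.1 : Matrix (Fin n) (Fin n) ℂ) * gX.2 :=
    ((continuous_subtype_val.comp continuous_fst).matrix_mul continuous_snd).measurable
  set Lam : (Matrix.unitaryGroup (Fin n) ℂ) × Matrix (Fin n) (Fin q) ℂ →
      Matrix (Fin p) (Fin q) ℂ :=
    fun gX => F ((gX.1 : Matrix (Fin n) (Fin n) ℂ) * gX.2) with hLam
  have hLamMeas : Measurable Lam := hFmeas.comp hmulGX
  have hrkmeas : MeasurableSet {A : Matrix (Fin n) (Fin q) ℂ | A.rank = q} := by
    have : {A : Matrix (Fin n) (Fin q) ℂ | A.rank = q}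
        = (fun A : Matrix (Fin n) (Fin q) ℂ => (Aᴴ * A).det) ⁻¹' ({0}ᶜ) := by
      ext A
      simp only [Set.mem_setOf_eq, Set.mem_preimage, Set.mem_compl_iff,
        Set.mem_singleton_iff]
      exact rank_iff_det A
    rw [this]
    exact ((continuous_id.matrix_conjTranspose.matrix_mul
      continuous_id).matrix_det).measurable (measurableSet_singleton 0).compl
  have hae : ∀ᵐ X ∂μX, X.rank = q := by
    rw [MeasureTheory.ae_iff]
    have hcompl := measure_compl hrkmeas (measure_ne_top μX _)
    rw [hrank, measure_univ] at hcompl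
    simpa [Set.compl_setOf] using hcompl
  ext s hs
  have stepA : (η.prod μX) (Lam ⁻¹' s) = (μX.map F) s := by
    rw [Measure.prod_apply (hLamMeas hs)]
    have hslice : ∀ g : Matrix.unitaryGroup (Fin n) ℂ,
        μX (Prod.mk g ⁻¹' (Lam ⁻¹' s)) = (μX.map F) s := by
      intro g
      have hmulg : Measurable fun X : Matrix (Fin n) (Fin q) ℂ =>
          (g : Matrix (Fin n) (Fin n) ℂ) * X :=
        (continuous_const.matrix_mul continuous_id).measurable
      have hpre : Prod.mk g ⁻¹' (Lam ⁻¹' s)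
          = (fun X : Matrix (Fin n) (Fin q) ℂ =>
              (g : Matrix (Fin n) (Fin n) ℂ) * X) ⁻¹' (F ⁻¹' s) := rfl
      rw [hpre, ← Measure.map_apply hmulg (hFmeas hs), hinv g,
        ← Measure.map_apply hFmeas hs]
    simp_rw [hslice]
    rw [lintegral_const, measure_univ, mul_one]
  have stepB : (η.prod μX) (Lam ⁻¹' s) = (η.map L) s := by
    rw [Measure.prod_apply_symm (hLamMeas hs)]
    have hae2 : ∀ᵐ X ∂μX,
        η ((fun g : Matrix.unitaryGroup (Fin n) ℂ => (g, X)) ⁻¹' (Lam ⁻¹' s))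
          = (η.map L) s := by
      filter_upwards [hae] with X hX
      have hW := stiefel_of_rank hp X hX
      obtain ⟨u, hu⟩ := exists_unitary_ext (hq.trans hp) _ hW
      have hfun : (fun g : Matrix.unitaryGroup (Fin n) ℂ =>
          F ((g : Matrix (Fin n) (Fin n) ℂ) * X)) = fun g => L (g * u) := by
        funext g
        have hLgu : L (g * u) = topRows n p q hp
            ((g : Matrix (Fin n) (Fin n) ℂ) * (X * (gramSqrt n p q hp X)⁻¹)) := by
          rw [hL]
          show topRows n p q hp (firstColumns n q (hq.trans hp)
            ((g : Matrix (Fin n) (Fin n) ℂ) * (u : Matrix (Fin n) (Fin n) ℂ))) = _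
          rw [firstColumns_mul, hu]
        rw [hLgu, hF]
        show topRows n p q hp ((g : Matrix (Fin n) (Fin n) ℂ) * X)
            * (gramSqrt n p q hp ((g : Matrix (Fin n) (Fin n) ℂ) * X))⁻¹ = _
        rw [gramSqrt_unitary hp X g, ← topRows_mul hp, Matrix.mul_assoc]
      have hpre : ((fun g : Matrix.unitaryGroup (Fin n) ℂ => (g, X)) ⁻¹' (Lam ⁻¹' s))
          = (fun g : Matrix.unitaryGroup (Fin n) ℂ =>
              F ((g : Matrix (Fin n) (Fin n) ℂ) * X)) ⁻¹' s := rfl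
      rw [hpre, hfun]
      have hmr : Measurable fun x : Matrix.unitaryGroup (Fin n) ℂ => x * u :=
        (continuous_id.mul continuous_const).measurable
      have : (fun g : Matrix.unitaryGroup (Fin n) ℂ => L (g * u))
          = L ∘ (fun g => g * u) := rfl
      rw [this, Set.preimage_comp, ← Measure.map_apply hmr (hLmeas hs),
        right_inv η hη hηinv u, ← Measure.map_apply hLmeas hs]
    rw [lintegral_congr_ae hae2, lintegral_const, measure_univ, mul_one]
  rw [← stepB, stepA]


end
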